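/- The one-dimensional kernel Φ(τ,y,a,b) satisfies the decay bound Φ(τ,y,a,b) ≤ (4πτ)^{-1/2}·√(θ/sinh θ)·exp{-τ a²·(sinh θ/(θ cosh θ))}, where θ = 2bτ. -/

import Mathlib

open Real

/-- Decay bound for the one-dimensional kernel `Φ(τ,y,a,b)`. -/
theorem phi_decay_bound (a b τ y : ℝ) (hb : 0 < b) (hτ : 0 < τ) :
    (1 / Real.sqrt (4 * π * τ)) * Real.sqrt ((2 * b * τ) / Real.sinh (2 * b * τ)) *
        Real.exp (-(1 / (4 * τ)) *
          (((2 * b * τ) * Real.cosh (2 * b * τ) / Real.sinh (2 * b * τ)) * y ^ 2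
            + 4 * a * τ * ((Real.cosh (2 * b * τ) - 1) / Real.sinh (2 * b * τ)) * y
            + 8 * a ^ 2 * τ ^ 2 *
              ((Real.cosh (2 * b * τ) - 1) / ((2 * b * τ) * Real.sinh (2 * b * τ))))) ≤
      (1 / Real.sqrt (4 * π * τ)) * Real.sqrt ((2 * b * τ) / Real.sinh (2 * b * τ)) *
        Real.exp (-τ * a ^ 2 *
          (Real.sinh (2 * b * τ) / ((2 * b * τ) * Real.cosh (2 * b * τ)))) := by
  have hθ : 0 < 2 * b * τ := by positivity
  have hs : 0 < Real.sinh (2 * b * τ) := Real.sinh_pos_iff.mpr hθ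
  have hc : 1 ≤ Real.cosh (2 * b * τ) := Real.one_le_cosh _
  have hc0 : 0 < Real.cosh (2 * b * τ) := lt_of_lt_of_le one_pos hc
  have hid : Real.cosh (2 * b * τ) ^ 2 = Real.sinh (2 * b * τ) ^ 2 + 1 := Real.cosh_sq _
  set s := Real.sinh (2 * b * τ) with hsdef
  set c := Real.cosh (2 * b * τ) with hcdef
  apply mul_le_mul_of_nonneg_left _ (by positivity)
  apply Real.exp_le_exp.mpr
  rw [neg_mul, neg_mul, neg_mul, neg_le_neg_iff]
  field_simp
  ring_nf
  have hid2 : τ ^ 3 * a ^ 2 * s * b * (c ^ 2 - s ^ 2 - 1) = 0 := by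
    rw [show c ^ 2 - s ^ 2 - 1 = 0 by rw [hid]; ring]; ring
  nlinarith [mul_nonneg (by positivity : (0:ℝ) ≤ 8 * τ ^ 3 * s * b)
      (sq_nonneg (b * c * y + a * (c - 1))), hid2,
      sq_nonneg (b * c * y + a * (c - 1)), (show a ^ 2 * c ^ 2 = a ^ 2 * (s ^ 2 + 1) by rw [hid])]
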